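/- Define I₀(z) := ∑_{k=0}^∞ (z²/4)^k / (k!)². Then for every real β ≥ 0 and every x ∈ [−1, 1], the Kaiser window function W_β(x) := I₀(β·√(1 − x²))/I₀(β) satisfies W_β(x) ≥ 1 − β·x²/2; equivalently, I₀(β·√(1 − x²)) ≥ (1 − β·x²/2)·I₀(β). -/

import Mathlib

open Real Set

/-- The zeroth modified Bessel function of the first kind,
`I₀(z) = ∑ₖ (z²/4)ᵏ/(k!)²`. -/
noncomputable def besselI0 (z : ℝ) : ℝ :=
  ∑' k : ℕ, (z ^ 2 / 4) ^ k / ((Nat.factorial k : ℝ)) ^ 2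

lemma summable_aux (c : ℝ) (hc : 0 ≤ c) :
    Summable (fun k : ℕ => c ^ k / ((Nat.factorial k : ℝ)) ^ 2) := by
  refine Summable.of_nonneg_of_le (fun k => by positivity) ?_
    (Real.summable_pow_div_factorial c)
  · intro k
    have h1 : (1 : ℝ) ≤ (Nat.factorial k : ℝ) := by
      exact_mod_cast (Nat.factorial_pos k)
    have h2 : (Nat.factorial k : ℝ) ≤ ((Nat.factorial k : ℝ)) ^ 2 := by nlinarith
    have h3 : (0 : ℝ) < (Nat.factorial k : ℝ) := by linarith
    gcongr

/-- **Parabola lower bound for the Kaiser window.** For `β ≥ 0` and `x ∈ [-1,1]`,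
`W_β(x) = I₀(β√(1-x²))/I₀(β) ≥ 1 - βx²/2`; equivalently
`I₀(β√(1-x²)) ≥ (1 - βx²/2)·I₀(β)`. -/
theorem kaiserWindow_ge_one_sub (β : ℝ) (hβ : 0 ≤ β) (x : ℝ)
    (hx : x ∈ Set.Icc (-1 : ℝ) 1) :
    1 - β * x ^ 2 / 2 ≤ besselI0 (β * Real.sqrt (1 - x ^ 2)) / besselI0 β ∧
    (1 - β * x ^ 2 / 2) * besselI0 β ≤ besselI0 (β * Real.sqrt (1 - x ^ 2)) := by
  obtain ⟨hx1, hx2⟩ := hx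
  set c : ℝ := β ^ 2 / 4 with hc
  have hc0 : 0 ≤ c := by positivity
  set t : ℝ := x ^ 2 with ht
  have ht0 : 0 ≤ t := sq_nonneg x
  have ht1 : t ≤ 1 := by rw [ht]; nlinarith
  have h1t : 0 ≤ 1 - t := by linarith
  set f : ℕ → ℝ := fun k => c ^ k / ((Nat.factorial k : ℝ)) ^ 2 with hf
  have hfs : Summable f := summable_aux c hc0
  have hf0 : ∀ k, 0 ≤ f k := fun k => by
    have := pow_nonneg hc0 k
    positivity
  have hB : besselI0 β = ∑' k, f k := by
    simp only [besselI0, hf, hc]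
  have hf0eq : f 0 = 1 := by simp [hf]
  have hBge1 : (1 : ℝ) ≤ ∑' k, f k := by
    have := Summable.le_tsum hfs 0 (fun j _ => hf0 j)
    rwa [hf0eq] at this
  have hBpos : 0 < besselI0 β := by rw [hB]; linarith
  -- the shifted series
  have hsq : (β * Real.sqrt (1 - x ^ 2)) ^ 2 / 4 = c * (1 - t) := by
    rw [mul_pow, Real.sq_sqrt (by nlinarith : (0:ℝ) ≤ 1 - x ^ 2)]
    rw [hc, ht]; ring
  have hS : besselI0 (β * Real.sqrt (1 - x ^ 2)) = ∑' k, f k * (1 - t) ^ k := by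
    simp only [besselI0, hsq]
    exact tsum_congr fun k => by rw [mul_pow, hf]; ring
  -- summability of k * f k
  have hfs1 : Summable (fun k : ℕ => f (k + 1)) := (summable_nat_add_iff 1).mpr hfs
  have hBnd : Summable (fun k : ℕ => β / 4 * (f (k + 1) + f k)) :=
    (hfs1.add hfs).mul_left (β / 4)
  have key : ∀ k : ℕ, ((k : ℝ) + 1) * f (k + 1) ≤ β / 4 * (f (k + 1) + f k) := by
    intro k
    have hfact : ((Nat.factorial (k + 1) : ℝ)) = ((k : ℝ) + 1) * (Nat.factorial k : ℝ) := by
      push_cast [Nat.factorial_succ]; ring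
    have hKpos : (0 : ℝ) < (Nat.factorial k : ℝ) := by exact_mod_cast Nat.factorial_pos k
    have hPpos : (0 : ℝ) < (k : ℝ) + 1 := by positivity
    have hkey0 : 4 * ((k : ℝ) + 1) * c ≤ β * (c + ((k : ℝ) + 1) ^ 2) := by
      rw [hc]
      nlinarith [mul_nonneg hβ (sq_nonneg (β / 2 - ((k : ℝ) + 1)))]
    have hck : (0 : ℝ) ≤ c ^ k := pow_nonneg hc0 k
    have heq : β / 4 * (f (k + 1) + f k) - ((k : ℝ) + 1) * f (k + 1)
        = (β * (c + ((k : ℝ) + 1) ^ 2) - 4 * ((k : ℝ) + 1) * c)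
          * (c ^ k / (4 * (((k : ℝ) + 1)) ^ 2 * ((Nat.factorial k : ℝ)) ^ 2)) := by
      simp only [hf]
      rw [hfact, pow_succ]
      field_simp
    have hnn : 0 ≤ (β * (c + ((k : ℝ) + 1) ^ 2) - 4 * ((k : ℝ) + 1) * c)
        * (c ^ k / (4 * (((k : ℝ) + 1)) ^ 2 * ((Nat.factorial k : ℝ)) ^ 2)) := by
      apply mul_nonneg (by linarith)
      positivity
    linarith [heq ▸ hnn]
  have hh : Summable (fun k : ℕ => ((k : ℝ) + 1) * f (k + 1)) := by
    apply Summable.of_nonneg_of_le (fun k => by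
      have := hf0 (k + 1); positivity) key hBnd
  have hg : Summable (fun k : ℕ => (k : ℝ) * f k) := by
    rw [← summable_nat_add_iff 1]
    convert hh using 2 with k
    case e'_5 => push_cast; ring
    case e'_3 => rfl
  -- bound on ∑ k f k
  have hshift : ∑' k : ℕ, f (k + 1) = (∑' k, f k) - 1 := by
    have := Summable.tsum_eq_zero_add hfs
    rw [hf0eq] at this
    linarith
  have hg_bound : ∑' k : ℕ, (k : ℝ) * f k ≤ β / 2 * ∑' k, f k := by
    have e1 : ∑' k : ℕ, (k : ℝ) * f k = ∑' k : ℕ, ((k : ℝ) + 1) * f (k + 1) := by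
      rw [Summable.tsum_eq_zero_add hg]
      push_cast
      simp
    have e2 : ∑' k : ℕ, ((k : ℝ) + 1) * f (k + 1) ≤ ∑' k : ℕ, β / 4 * (f (k + 1) + f k) :=
      Summable.tsum_le_tsum key hh hBnd
    have e3 : ∑' k : ℕ, β / 4 * (f (k + 1) + f k) = β / 4 * ((∑' k, f k) - 1 + ∑' k, f k) := by
      rw [tsum_mul_left, Summable.tsum_add hfs1 hfs, hshift]
    have e4 : β / 4 * ((∑' k, f k) - 1 + ∑' k, f k) ≤ β / 2 * ∑' k, f k := by nlinarith
    rw [e1]; linarith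
  -- Bernoulli step
  have hsum_lhs : Summable (fun k : ℕ => f k - t * ((k : ℝ) * f k)) :=
    hfs.sub (hg.mul_left t)
  have hsum_rhs : Summable (fun k : ℕ => f k * (1 - t) ^ k) := by
    apply Summable.of_nonneg_of_le
      (fun k => mul_nonneg (hf0 k) (pow_nonneg h1t k))
      (fun k => mul_le_of_le_one_right (hf0 k) (pow_le_one₀ h1t (by linarith)))
      hfs
  have step : ∑' k : ℕ, (f k - t * ((k : ℝ) * f k)) ≤ ∑' k : ℕ, f k * (1 - t) ^ k := by
    apply Summable.tsum_le_tsum _ hsum_lhs hsum_rhs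
    intro k
    have hb : 1 - (k : ℝ) * t ≤ (1 - t) ^ k := by
      have h := one_add_mul_le_pow (show (-2 : ℝ) ≤ -t by linarith) k
      rw [show (1 : ℝ) + -t = 1 - t by ring] at h
      linarith
    have := mul_le_mul_of_nonneg_left hb (hf0 k)
    nlinarith [hf0 k]
  have heval : ∑' k : ℕ, (f k - t * ((k : ℝ) * f k))
      = (∑' k, f k) - t * ∑' k : ℕ, (k : ℝ) * f k := by
    rw [Summable.tsum_sub hfs (hg.mul_left t), tsum_mul_left]
  have htg : t * ∑' k : ℕ, (k : ℝ) * f k ≤ t * (β / 2 * ∑' k, f k) :=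
    mul_le_mul_of_nonneg_left hg_bound ht0
  have second : (1 - β * t / 2) * besselI0 β ≤ besselI0 (β * Real.sqrt (1 - x ^ 2)) := by
    rw [hB, hS]
    have : (1 - β * t / 2) * (∑' k, f k)
        = (∑' k, f k) - t * (β / 2 * ∑' k, f k) := by ring
    rw [this]
    calc (∑' k, f k) - t * (β / 2 * ∑' k, f k)
        ≤ (∑' k, f k) - t * ∑' k : ℕ, (k : ℝ) * f k := by linarith
      _ = ∑' k : ℕ, (f k - t * ((k : ℝ) * f k)) := heval.symm
      _ ≤ ∑' k : ℕ, f k * (1 - t) ^ k := step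
  exact ⟨(le_div_iff₀ hBpos).mpr second, second⟩
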